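/- Cartan decomposition, uniqueness: let R be a discrete valuation ring with uniformiser ϖ and fraction field K. If k₁, k₂, k₁', k₂' ∈ GL_n(R) and f, f' : Fin n → ℤ are antitone functions such that k₁·diag(ϖ^f)·k₂ = k₁'·diag(ϖ^{f'})·k₂' in GL_n(K), then f = f'. -/

import Mathlib

open Matrix

/-- The diagonal matrix over `K` with `i`-th diagonal entry `ϖ ^ f i`, for `f : Fin n → ℤ`. -/
noncomputable def cartanDiag {R : Type*} [CommRing R] {K : Type*} [Field K] [Algebra R K]
    (ϖ : R) {n : ℕ} (f : Fin n → ℤ) : Matrix (Fin n) (Fin n) K :=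
  Matrix.diagonal fun i => (algebraMap R K ϖ) ^ (f i)

namespace CartanUniqueAux

/-- The embedding of `Fin k` onto the last `k` indices of `Fin n`. -/
def lastIdx {n k : ℕ} (hk : k ≤ n) (j : Fin k) : Fin n :=
  ⟨n - k + j, by omega⟩

lemma lastIdx_injective {n k : ℕ} (hk : k ≤ n) : Function.Injective (lastIdx hk) := by
  intro i j hij
  have h1 : (lastIdx hk i : ℕ) = (lastIdx hk j : ℕ) := by rw [hij]
  have hi := i.isLt
  have hj := j.isLt
  simp only [lastIdx] at h1
  exact Fin.ext (by omega)

lemma le_of_strictMono {k n : ℕ} {g : Fin k → Fin n} (hg : StrictMono g) :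
    ∀ (m : ℕ) (hm : m < k), m ≤ (g ⟨m, hm⟩ : ℕ) := by
  intro m
  induction m with
  | zero => intro hm; exact Nat.zero_le _
  | succ p ih =>
    intro hm
    have hp : p < k := by omega
    have h1 : g ⟨p, hp⟩ < g ⟨p + 1, hm⟩ := hg (by simp [Fin.lt_def])
    have h2 := ih hp
    rw [Fin.lt_def] at h1
    omega

lemma strictMono_apply_le {k n : ℕ} {g : Fin k → Fin n} (hg : StrictMono g) (j : Fin k) :
    (g j : ℕ) ≤ n - k + j := by
  have hk : k ≤ n := by
    simpa using Fintype.card_le_of_injective g hg.injective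
  have hgs : StrictMono (fun t : Fin k => (g t.rev).rev) := by
    intro s t hst
    exact Fin.rev_lt_rev.mpr (hg (Fin.rev_lt_rev.mpr hst))
  have h1 := le_of_strictMono hgs (j.rev : ℕ) (j.rev.isLt)
  simp only [Fin.eta, Fin.rev_rev] at h1
  have hv : ((g j.rev.rev).rev : ℕ) = n - 1 - (g j.rev.rev) := by
    rw [Fin.val_rev]; omega
  rw [Fin.rev_rev] at hv
  rw [hv] at h1
  have hvj : (j.rev : ℕ) = k - 1 - (j : ℕ) := by rw [Fin.val_rev]; omega
  rw [hvj] at h1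
  have h2 := j.isLt
  have h3 := (g j).isLt
  omega

lemma sum_last_le {n k : ℕ} (hk : k ≤ n) {a : Fin n → ℕ} (ha : Antitone a)
    {c : Fin k → Fin n} (hc : Function.Injective c) :
    ∑ j : Fin k, a (lastIdx hk j) ≤ ∑ j : Fin k, a (c j) := by
  classical
  set s : Finset (Fin n) := Finset.image c Finset.univ with hs
  have hcard : s.card = k := by
    rw [hs, Finset.card_image_of_injective _ hc, Finset.card_univ, Fintype.card_fin]
  have h1 : ∑ x ∈ s, a x = ∑ j : Fin k, a (c j) := by
    rw [hs]; exact Finset.sum_image (fun x _ y _ hxy => hc hxy)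
  have himg : Finset.image (fun j => s.orderEmbOfFin hcard j) Finset.univ = s := by
    ext x
    simp only [Finset.mem_image, Finset.mem_univ, true_and]
    constructor
    · rintro ⟨j, rfl⟩; exact Finset.orderEmbOfFin_mem s hcard j
    · intro hx
      have hxr : x ∈ Set.range (s.orderEmbOfFin hcard) := by
        rw [Finset.range_orderEmbOfFin]; exact hx
      obtain ⟨j, hj⟩ := hxr
      exact ⟨j, hj⟩
  have h2 : ∑ x ∈ s, a x = ∑ j : Fin k, a (s.orderEmbOfFin hcard j) := by
    conv_lhs => rw [← himg]
    exact Finset.sum_image (fun x _ y _ hxy => (s.orderEmbOfFin hcard).injective hxy)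
  rw [← h1, h2]
  apply Finset.sum_le_sum
  intro j _
  apply ha
  rw [Fin.le_def]
  exact strictMono_apply_le (s.orderEmbOfFin hcard).strictMono j

variable {R : Type*} [CommRing R]

lemma dvd_det_submatrix_diagonal {n k : ℕ} (hk : k ≤ n) (ϖ : R) {a : Fin n → ℕ}
    (ha : Antitone a) (r c : Fin k → Fin n) :
    ϖ ^ (∑ j : Fin k, a (lastIdx hk j)) ∣
      (((Matrix.diagonal fun i => ϖ ^ a i)).submatrix r c).det := by
  classical
  by_cases hc : Function.Injective c
  · rw [Matrix.det_apply']
    apply Finset.dvd_sum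
    intro σ _
    by_cases hall : ∀ i, r (σ i) = c i
    · have hterm : ∀ i : Fin k,
          ((Matrix.diagonal fun i => ϖ ^ a i).submatrix r c) (σ i) i = ϖ ^ a (c i) := by
        intro i
        rw [Matrix.submatrix_apply, hall i, Matrix.diagonal_apply_eq]
      rw [Finset.prod_congr rfl (fun i _ => hterm i), Finset.prod_pow_eq_pow_sum]
      exact Dvd.dvd.mul_left (pow_dvd_pow ϖ (sum_last_le hk ha hc)) _
    · push_neg at hall
      obtain ⟨i0, hi0⟩ := hall
      have hz : ((Matrix.diagonal fun i => ϖ ^ a i).submatrix r c) (σ i0) i0 = 0 := by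
        rw [Matrix.submatrix_apply, Matrix.diagonal_apply_ne _ hi0]
      have hp : (∏ i : Fin k, ((Matrix.diagonal fun i => ϖ ^ a i).submatrix r c) (σ i) i) = 0 :=
        Finset.prod_eq_zero (Finset.mem_univ i0) hz
      rw [hp, mul_zero]
      exact dvd_zero _
  · rw [Function.not_injective_iff] at hc
    obtain ⟨i, j, hij, hne⟩ := hc
    rw [Matrix.det_zero_of_column_eq hne
      (fun t => by rw [Matrix.submatrix_apply, Matrix.submatrix_apply, hij])]
    exact dvd_zero _

lemma det_mul_expansion {k n : ℕ} (P : Matrix (Fin k) (Fin n) R) (Q : Matrix (Fin n) (Fin k) R) :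
    (P * Q).det = ∑ p : Fin k → Fin n, (∏ i, P i (p i)) • (Q.submatrix p id).det := by
  classical
  have h1 : P * Q = Matrix.of fun i => ∑ t : Fin n, P i t • Q t := by
    ext i j
    simp [Matrix.mul_apply, Finset.sum_apply]
  have h0 : (P * Q).det
      = (Matrix.detRowAlternating (R := R) (n := Fin k)).toMultilinearMap (P * Q) := rfl
  rw [h0]
  refine (congrArg _ h1).trans ?_
  refine ((Matrix.detRowAlternating (R := R)
      (n := Fin k)).toMultilinearMap.map_sum (fun i t => P i t • Q t)).trans ?_
  refine Finset.sum_congr rfl fun p _ => ?_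
  exact (Matrix.detRowAlternating (R := R)
      (n := Fin k)).toMultilinearMap.map_smul_univ (fun i => P i (p i)) (fun i => Q (p i))

lemma dvd_det_submatrix_mul_right {n k m : ℕ} {ϖ : R} (M N : Matrix (Fin n) (Fin n) R)
    (hN : ∀ r c : Fin k → Fin n, ϖ ^ m ∣ (N.submatrix r c).det) (r c : Fin k → Fin n) :
    ϖ ^ m ∣ ((M * N).submatrix r c).det := by
  rw [Matrix.submatrix_mul M N r id c Function.bijective_id, det_mul_expansion]
  apply Finset.dvd_sum
  intro p _
  rw [smul_eq_mul]
  have hsub : ((N.submatrix id c).submatrix p id) = N.submatrix p c := by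
    rw [Matrix.submatrix_submatrix, Function.id_comp, Function.comp_id]
  rw [hsub]
  exact (hN p c).mul_left _

lemma dvd_det_submatrix_mul_left {n k m : ℕ} {ϖ : R} (M N : Matrix (Fin n) (Fin n) R)
    (hM : ∀ r c : Fin k → Fin n, ϖ ^ m ∣ (M.submatrix r c).det) (r c : Fin k → Fin n) :
    ϖ ^ m ∣ ((M * N).submatrix r c).det := by
  have hMt : ∀ r c : Fin k → Fin n, ϖ ^ m ∣ ((Mᵀ).submatrix r c).det := by
    intro r c
    rw [← Matrix.transpose_submatrix, Matrix.det_transpose]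
    exact hM c r
  have h2 := dvd_det_submatrix_mul_right Nᵀ Mᵀ hMt c r
  rwa [← Matrix.transpose_mul, ← Matrix.transpose_submatrix, Matrix.det_transpose] at h2

lemma sum_le_of_eq_mul {R : Type*} [CommRing R] [IsDomain R] {ϖ : R} (hϖ : Irreducible ϖ)
    {n : ℕ} {a b : Fin n → ℕ} (hb : Antitone b) {X Y : Matrix (Fin n) (Fin n) R}
    (E : (Matrix.diagonal fun i => ϖ ^ a i) = X * (Matrix.diagonal fun i => ϖ ^ b i) * Y)
    {k : ℕ} (hk : k ≤ n) :
    ∑ j : Fin k, b (lastIdx hk j) ≤ ∑ j : Fin k, a (lastIdx hk j) := by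
  classical
  have hD : ∀ r c : Fin k → Fin n, ϖ ^ (∑ j : Fin k, b (lastIdx hk j)) ∣
      (((Matrix.diagonal fun i => ϖ ^ b i)).submatrix r c).det :=
    dvd_det_submatrix_diagonal hk ϖ hb
  have h1 : ∀ r c : Fin k → Fin n, ϖ ^ (∑ j : Fin k, b (lastIdx hk j)) ∣
      (((X * Matrix.diagonal fun i => ϖ ^ b i)).submatrix r c).det :=
    fun r c => dvd_det_submatrix_mul_right _ _ hD r c
  have h2 := dvd_det_submatrix_mul_left (X * Matrix.diagonal fun i => ϖ ^ b i) Y h1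
    (lastIdx hk) (lastIdx hk)
  rw [← E] at h2
  have hsub : (Matrix.diagonal fun i => ϖ ^ a i).submatrix (lastIdx hk) (lastIdx hk)
      = Matrix.diagonal (fun j => ϖ ^ a (lastIdx hk j)) := by
    ext i j
    by_cases hij : i = j
    · subst hij; simp
    · rw [Matrix.submatrix_apply, Matrix.diagonal_apply_ne _ hij, Matrix.diagonal_apply_ne]
      exact fun hcon => hij (lastIdx_injective hk hcon)
  rw [hsub, Matrix.det_diagonal, Finset.prod_pow_eq_pow_sum] at h2
  exact (pow_dvd_pow_iff hϖ.ne_zero hϖ.not_isUnit).mp h2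

lemma eq_of_sums {n : ℕ} {a b : Fin n → ℕ}
    (H : ∀ k (hk : k ≤ n), ∑ j : Fin k, a (lastIdx hk j) = ∑ j : Fin k, b (lastIdx hk j)) :
    a = b := by
  funext i
  obtain ⟨iv, hi⟩ := i
  set k := n - 1 - iv with hkdef
  have hk1 : k ≤ n := by omega
  have hk2 : k + 1 ≤ n := by omega
  have h1 := H k hk1
  have h2 := H (k + 1) hk2
  rw [Fin.sum_univ_succ, Fin.sum_univ_succ] at h2
  have e0 : lastIdx hk2 (0 : Fin (k + 1)) = ⟨iv, hi⟩ := by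
    refine Fin.ext ?_
    simp only [lastIdx, Fin.val_zero]
    omega
  have esucc : ∀ j : Fin k, lastIdx hk2 j.succ = lastIdx hk1 j := by
    intro j
    have hj := j.isLt
    refine Fin.ext ?_
    simp only [lastIdx, Fin.val_succ]
    omega
  rw [e0, Finset.sum_congr rfl (fun j _ => congrArg a (esucc j)),
    Finset.sum_congr rfl (fun j _ => congrArg b (esucc j))] at h2
  omega

end CartanUniqueAux

open CartanUniqueAux in
/-- **Cartan decomposition, uniqueness.** Let `R` be a discrete valuation ring with
uniformiser `ϖ` and fraction field `K`. If `k₁, k₂, k₁', k₂' ∈ GLₙ(R)` and `f, f' : Fin n → ℤ`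
are antitone with `k₁ * diag (ϖ ^ f) * k₂ = k₁' * diag (ϖ ^ f') * k₂'` in `GLₙ(K)`,
then `f = f'`. -/
theorem cartan_decomposition_unique {R : Type*} [CommRing R] [IsDomain R]
    [IsDiscreteValuationRing R] {K : Type*} [Field K] [Algebra R K] [IsFractionRing R K]
    (ϖ : R) (hϖ : Irreducible ϖ) {n : ℕ}
    {k₁ k₂ k₁' k₂' : GL (Fin n) R} {f f' : Fin n → ℤ}
    (hf : Antitone f) (hf' : Antitone f')
    (h : (((Matrix.GeneralLinearGroup.map (n := Fin n) (algebraMap R K)) k₁ :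
            Matrix (Fin n) (Fin n) K)) * cartanDiag ϖ f *
          ((Matrix.GeneralLinearGroup.map (n := Fin n) (algebraMap R K)) k₂ :
            Matrix (Fin n) (Fin n) K) =
        (((Matrix.GeneralLinearGroup.map (n := Fin n) (algebraMap R K)) k₁' :
            Matrix (Fin n) (Fin n) K)) * cartanDiag ϖ f' *
          ((Matrix.GeneralLinearGroup.map (n := Fin n) (algebraMap R K)) k₂' :
            Matrix (Fin n) (Fin n) K)) :
    f = f' := by
  classical
  rcases Nat.eq_zero_or_pos n with hn | hn
  · subst hn; funext i; exact i.elim0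
  have hφ : Function.Injective (algebraMap R K) := IsFractionRing.injective R K
  have hπ : (algebraMap R K) ϖ ≠ 0 := fun h0 => hϖ.ne_zero (hφ (by simpa using h0))
  set ilast : Fin n := ⟨n - 1, by omega⟩ with hilast
  set c : ℤ := min (f ilast) (f' ilast) with hc
  have hile : ∀ i : Fin n, i ≤ ilast := by
    intro i
    rw [Fin.le_def]
    have := i.isLt
    simp only [hilast]
    omega
  have hcf : ∀ i, c ≤ f i := fun i => le_trans (min_le_left _ _) (hf (hile i))
  have hcf' : ∀ i, c ≤ f' i := fun i => le_trans (min_le_right _ _) (hf' (hile i))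
  set a : Fin n → ℕ := fun i => (f i - c).toNat with ha
  set b : Fin n → ℕ := fun i => (f' i - c).toNat with hb
  have hfa : ∀ i, f i = c + a i := by
    intro i
    have := hcf i
    simp only [ha]
    rw [Int.toNat_of_nonneg (by omega)]
    ring
  have hfb : ∀ i, f' i = c + b i := by
    intro i
    have := hcf' i
    simp only [hb]
    rw [Int.toNat_of_nonneg (by omega)]
    ring
  have haA : Antitone a := by
    intro i j hij
    have := hf hij
    simp only [ha]
    exact Int.toNat_le_toNat (by omega)
  have hbA : Antitone b := by
    intro i j hij
    have := hf' hij
    simp only [hb]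
    exact Int.toNat_le_toNat (by omega)
  -- rewrite `cartanDiag` as a scalar multiple of the image of an `R`-matrix
  have hdiag : ∀ (g : Fin n → ℤ) (w : Fin n → ℕ), (∀ i, g i = c + w i) →
      cartanDiag (K := K) ϖ g
        = (algebraMap R K ϖ) ^ c • ((Matrix.diagonal fun i => ϖ ^ w i).map (algebraMap R K)) := by
    intro g w hgw
    unfold cartanDiag
    ext i j
    by_cases hij : i = j
    · subst hij
      rw [Matrix.smul_apply, Matrix.map_apply, Matrix.diagonal_apply_eq,
        Matrix.diagonal_apply_eq, hgw i, zpow_add₀ hπ, zpow_natCast, map_pow, smul_eq_mul]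
    · rw [Matrix.smul_apply, Matrix.map_apply, Matrix.diagonal_apply_ne _ hij,
        Matrix.diagonal_apply_ne _ hij, map_zero, smul_zero]
  have hcoe : ∀ g : GL (Fin n) R,
      ((Matrix.GeneralLinearGroup.map (n := Fin n) (algebraMap R K)) g :
        Matrix (Fin n) (Fin n) K) = (g : Matrix (Fin n) (Fin n) R).map (algebraMap R K) := by
    intro g
    ext i j
    rw [Matrix.map_apply]
    exact Matrix.GeneralLinearGroup.map_apply (algebraMap R K) i j g
  rw [hdiag f a hfa, hdiag f' b hfb, hcoe k₁, hcoe k₂, hcoe k₁', hcoe k₂'] at h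
  simp only [Matrix.mul_smul, Matrix.smul_mul] at h
  have h' := smul_right_injective (Matrix (Fin n) (Fin n) K) (zpow_ne_zero c hπ) h
  rw [← Matrix.map_mul, ← Matrix.map_mul, ← Matrix.map_mul, ← Matrix.map_mul] at h'
  have hR : (k₁ : Matrix (Fin n) (Fin n) R) * (Matrix.diagonal fun i => ϖ ^ a i) * k₂
      = (k₁' : Matrix (Fin n) (Fin n) R) * (Matrix.diagonal fun i => ϖ ^ b i) * k₂' :=
    Matrix.map_injective hφ h'
  have E1 : (Matrix.diagonal fun i => ϖ ^ b i)
      = ((k₁'⁻¹ : GL (Fin n) R) * k₁ : Matrix (Fin n) (Fin n) R)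
        * (Matrix.diagonal fun i => ϖ ^ a i)
        * ((k₂ : Matrix (Fin n) (Fin n) R) * (k₂'⁻¹ : GL (Fin n) R)) := by
    calc (Matrix.diagonal fun i => ϖ ^ b i)
        = 1 * (Matrix.diagonal fun i => ϖ ^ b i) * 1 := by rw [one_mul, mul_one]
      _ = ((k₁'⁻¹ : GL (Fin n) R) * (k₁' : Matrix (Fin n) (Fin n) R))
            * (Matrix.diagonal fun i => ϖ ^ b i)
            * ((k₂' : Matrix (Fin n) (Fin n) R) * (k₂'⁻¹ : GL (Fin n) R)) := by
          rw [Units.inv_mul, Units.mul_inv]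
      _ = (k₁'⁻¹ : GL (Fin n) R)
            * ((k₁' : Matrix (Fin n) (Fin n) R) * (Matrix.diagonal fun i => ϖ ^ b i) * k₂')
            * (k₂'⁻¹ : GL (Fin n) R) := by simp only [Matrix.mul_assoc]
      _ = (k₁'⁻¹ : GL (Fin n) R)
            * ((k₁ : Matrix (Fin n) (Fin n) R) * (Matrix.diagonal fun i => ϖ ^ a i) * k₂)
            * (k₂'⁻¹ : GL (Fin n) R) := by rw [← hR]
      _ = _ := by noncomm_ring
  have E2 : (Matrix.diagonal fun i => ϖ ^ a i)
      = ((k₁⁻¹ : GL (Fin n) R) * k₁' : Matrix (Fin n) (Fin n) R)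
        * (Matrix.diagonal fun i => ϖ ^ b i)
        * ((k₂' : Matrix (Fin n) (Fin n) R) * (k₂⁻¹ : GL (Fin n) R)) := by
    calc (Matrix.diagonal fun i => ϖ ^ a i)
        = 1 * (Matrix.diagonal fun i => ϖ ^ a i) * 1 := by rw [one_mul, mul_one]
      _ = ((k₁⁻¹ : GL (Fin n) R) * (k₁ : Matrix (Fin n) (Fin n) R))
            * (Matrix.diagonal fun i => ϖ ^ a i)
            * ((k₂ : Matrix (Fin n) (Fin n) R) * (k₂⁻¹ : GL (Fin n) R)) := by
          rw [Units.inv_mul, Units.mul_inv]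
      _ = (k₁⁻¹ : GL (Fin n) R)
            * ((k₁ : Matrix (Fin n) (Fin n) R) * (Matrix.diagonal fun i => ϖ ^ a i) * k₂)
            * (k₂⁻¹ : GL (Fin n) R) := by simp only [Matrix.mul_assoc]
      _ = (k₁⁻¹ : GL (Fin n) R)
            * ((k₁' : Matrix (Fin n) (Fin n) R) * (Matrix.diagonal fun i => ϖ ^ b i) * k₂')
            * (k₂⁻¹ : GL (Fin n) R) := by rw [hR]
      _ = _ := by noncomm_ring
  have hab : a = b := by
    apply eq_of_sums
    intro k hk
    have hle1 := sum_le_of_eq_mul hϖ haA E1 hk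
    have hle2 := sum_le_of_eq_mul hϖ hbA E2 hk
    omega
  funext i
  rw [hfa i, hfb i, hab]
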